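/- Let p be a prime or p = ∞. Assume E[|log|a₁|_p|] < ∞, E[log⁺|b₁|_p] < ∞, and φ_p = E[log|a₁|_p] < 0, and let Z_∞^p denote the almost sure limit in ℚ_p of Σ_{k=1}^n a₁⋯a_{k−1} b_k. Then almost surely, for every z ∈ ℚ_p, the orbit of z under the random walk converges to Z_∞^p: A_n z + B_n → Z_∞^p in ℚ_p as n → ∞. -/

import Mathlib

open MeasureTheory ProbabilityTheory Filter Topology

/-- With `K` a complete normed field realizing a place of `ℚ`
(a prime `p` or `p = ∞`) and `(aₙ, bₙ)` i.i.d. in `ℚ* × ℚ`, assume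
`E[|log |a₁|_p|] < ∞`, `E[log⁺ |b₁|_p] < ∞` and `φ_p = E[log |a₁|_p] < 0`, and let
`Z_∞^p` be the a.s. limit of the partial sums `B_n = Σ_{k=1}^n a₁⋯a_{k-1} b_k` in `ℚ_p`.
Then almost surely, for every `z ∈ ℚ_p`, `A_n z + B_n → Z_∞^p`. -/
theorem statement1
    {Ω : Type*} [MeasureSpace Ω] [IsProbabilityMeasure (ℙ : Measure Ω)]
    (a b : ℕ → Ω → ℚ)
    (hmeas : ∀ n, Measurable fun ω => (a n ω, b n ω))
    (hindep : iIndepFun (fun n ω => (a n ω, b n ω)) ℙ)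
    (hident : ∀ n, IdentDistrib (fun ω => (a n ω, b n ω)) (fun ω => (a 0 ω, b 0 ω)) ℙ ℙ)
    (hne : ∀ n ω, a n ω ≠ 0)
    {K : Type*} [NormedField K] [CompleteSpace K]
    (ι : ℚ →+* K) (hdense : DenseRange ι)
    (hplace : (∀ q : ℚ, ‖ι q‖ = |(q : ℝ)|) ∨
      ∃ p : ℕ, p.Prime ∧ ∀ q : ℚ, ‖ι q‖ = (padicNorm p q : ℝ))
    (hInta : Integrable (fun ω => Real.log ‖ι (a 0 ω)‖) ℙ)
    (hIntb : Integrable (fun ω => max (Real.log ‖ι (b 0 ω)‖) 0) ℙ)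
    (hdrift : ∫ ω, Real.log ‖ι (a 0 ω)‖ ∂ℙ < 0)
    (Z : Ω → K)
    (hZ : ∀ᵐ ω ∂ℙ,
      Tendsto (fun n => ι (∑ k ∈ Finset.range n, (∏ j ∈ Finset.range k, a j ω) * b k ω))
        atTop (𝓝 (Z ω))) :
    ∀ᵐ ω ∂ℙ, ∀ z : K,
      Tendsto (fun n =>
          ι (∏ k ∈ Finset.range n, a k ω) * z
            + ι (∑ k ∈ Finset.range n, (∏ j ∈ Finset.range k, a j ω) * b k ω))
        atTop (𝓝 (Z ω)) := by
  classical
  -- the log-norm random variables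
  set X : ℕ → Ω → ℝ := fun n ω => Real.log ‖ι (a n ω)‖ with hX
  have hg : Measurable fun pq : ℚ × ℚ => Real.log ‖ι pq.1‖ :=
    ((measurable_from_top (f := fun q : ℚ => Real.log ‖ι q‖)).comp measurable_fst)
  have hXmeas : ∀ n, Measurable (X n) := fun n => hg.comp (hmeas n)
  have hXindep : Pairwise (Function.onFun (IndepFun · · ℙ) X) := by
    intro i j hij
    exact (hindep.comp (fun _ pq => Real.log ‖ι pq.1‖) (fun _ => hg)).indepFun hij
  have hXident : ∀ n, IdentDistrib (X n) (X 0) ℙ ℙ := fun n =>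
    (hident n).comp hg
  have hslln := strong_law_ae_real X hInta hXindep hXident
  filter_upwards [hslln, hZ] with ω hω hZω z
  -- sum of logs tends to -∞
  have hSbot : Tendsto (fun n : ℕ => ∑ i ∈ Finset.range n, X i ω) atTop atBot := by
    have h1 : Tendsto (fun n : ℕ => ((n : ℝ)) *
        ((∑ i ∈ Finset.range n, X i ω) / n)) atTop atBot :=
      tendsto_natCast_atTop_atTop.atTop_mul_neg hdrift hω
    refine h1.congr' ?_
    filter_upwards [eventually_ge_atTop 1] with n hn
    have : (n : ℝ) ≠ 0 := by positivity
    field_simp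
  have hpos : ∀ k, (0:ℝ) < ‖ι (a k ω)‖ := fun k =>
    norm_pos_iff.mpr (map_ne_zero ι |>.mpr (hne k ω))
  -- norm of the product tends to 0
  have hnorm : Tendsto (fun n : ℕ => ‖ι (∏ k ∈ Finset.range n, a k ω)‖) atTop (𝓝 0) := by
    have heq : ∀ n : ℕ, ‖ι (∏ k ∈ Finset.range n, a k ω)‖ =
        Real.exp (∑ i ∈ Finset.range n, X i ω) := by
      intro n
      rw [Real.exp_sum, map_prod, norm_prod]
      exact Finset.prod_congr rfl fun k _ => (Real.exp_log (hpos k)).symm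
    exact (Real.tendsto_exp_atBot.comp hSbot).congr fun n => (heq n).symm
  have hA : Tendsto (fun n : ℕ => ι (∏ k ∈ Finset.range n, a k ω)) atTop (𝓝 0) :=
    tendsto_zero_iff_norm_tendsto_zero.mpr hnorm
  have hAz : Tendsto (fun n : ℕ => ι (∏ k ∈ Finset.range n, a k ω) * z) atTop (𝓝 0) := by
    simpa using hA.mul_const z
  simpa using hAz.add hZω
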